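/- Fix 1 ≤ q < ∞, 1 ≤ s ≤ n and ρ > 0. Let T_{ρ,s}^q = {x ∈ ℂⁿ : ∃ S ⊂ [n] with |S| = s such that ‖x_S‖_q ≥ (ρ/s^{1−1/q}) ‖x_{S^c}‖₁}, and let D_s^q be the convex hull of Σ_s^q = {x ∈ ℂⁿ : ‖x‖₀ ≤ s, ‖x‖_q = 1}. Then T_{ρ,s}^q ∩ B_{ℓ_q^n} ⊂ (2 + ρ^{−1}) D_s^q, where B_{ℓ_q^n} is the unit ball of the ℓ_q-norm on ℂⁿ. -/

import Mathlib

open MeasureTheory ProbabilityTheory Real Finset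
open scoped ENNReal NNReal

noncomputable section

/-- The `ℓ_p` norm of a finite vector, for `p ∈ [1,∞]`. -/
def lpNorm {E : Type*} [NormedAddCommGroup E] {n : ℕ} (p : ℝ≥0∞) (x : Fin n → E) : ℝ :=
  if p = ∞ then ⨆ i, ‖x i‖ else (∑ i, ‖x i‖ ^ p.toReal) ^ (1 / p.toReal)

/-- The `ℓ_p` norm for a finite real exponent `p`. -/
def lpNormR {E : Type*} [NormedAddCommGroup E] {n : ℕ} (p : ℝ) (x : Fin n → E) : ℝ :=
  (∑ i, ‖x i‖ ^ p) ^ (1 / p)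

/-- `‖x‖₀`, the number of nonzero entries of `x`. -/
def sparsity {E : Type*} [Zero E] {n : ℕ} (x : Fin n → E) : ℕ :=
  (Function.support x).ncard

/-- The error of best `s`-term approximation in `ℓ₁`. -/
def sigmaApprox1 {E : Type*} [NormedAddCommGroup E] {n : ℕ} (s : ℕ) (x : Fin n → E) : ℝ :=
  sInf {t | ∃ z : Fin n → E, sparsity z ≤ s ∧ t = lpNormR 1 (x - z)}

/-- Restriction `x_S` of a vector to the coordinates in `S` (zero elsewhere). -/
def restrictS {E : Type*} [Zero E] {n : ℕ} (S : Finset (Fin n)) (x : Fin n → E) : Fin n → E :=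
  fun i => if i ∈ S then x i else 0

/-- The cone `T_{ρ,s}^q`. -/
def coneT (E : Type*) [NormedAddCommGroup E] {n : ℕ} (q ρ : ℝ) (s : ℕ) : Set (Fin n → E) :=
  {x | ∃ S : Finset (Fin n), S.card = s ∧
    ρ / (s : ℝ) ^ (1 - 1/q) * lpNormR 1 (restrictS Sᶜ x) ≤ lpNormR q (restrictS S x)}

/-- The set `Σ_s^q` of unit `ℓ_q`-norm `s`-sparse vectors. -/
def SigmaSparse (E : Type*) [NormedAddCommGroup E] {n : ℕ} (q : ℝ) (s : ℕ) : Set (Fin n → E) :=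
  {x | sparsity x ≤ s ∧ lpNormR q x = 1}

/-- The nonincreasing rearrangement of `(‖x i‖)_i`. -/
def nonincRearrange {E : Type*} [NormedAddCommGroup E] {n : ℕ} (x : Fin n → E) : Fin n → ℝ :=
  fun i => ‖x (Tuple.sort (fun j => -‖x j‖) i)‖

/-- The norm `‖·‖_{D_s^q}` given by sums of `ℓ_q` norms over consecutive blocks of size `s`
of the nonincreasing rearrangement. -/
def DsNorm {n : ℕ} (q : ℝ) (s : ℕ) (x : Fin n → ℂ) : ℝ :=
  ∑ ℓ ∈ Finset.range ((n + s - 1) / s),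
    (∑ i ∈ Finset.univ.filter (fun i : Fin n => s * ℓ ≤ i.val ∧ i.val < s * (ℓ + 1)),
      (nonincRearrange x i) ^ q) ^ (1/q)

/-- A Rademacher sequence: independent random signs. -/
def IsRademacherSeq {Ω : Type*} [MeasurableSpace Ω] (μ : Measure Ω) {m : ℕ}
    (ε : Fin m → Ω → ℝ) : Prop :=
  iIndepFun ε μ ∧
    ∀ i, μ {ω | ε i ω = 1} = 1/2 ∧ μ {ω | ε i ω = -1} = 1/2

/-- The standard Gaussian measure on `ℝⁿ`. -/
def stdGaussian (n : ℕ) : Measure (Fin n → ℝ) :=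
  Measure.pi fun _ => gaussianReal 0 1

/-- complex matrix-vector product for a real matrix -/
def cMulVec {m n : ℕ} (A : Matrix (Fin m) (Fin n) ℝ) (z : Fin n → ℂ) : Fin m → ℂ :=
  (A.map (fun a => (a : ℂ))).mulVec z

end
open scoped Pointwise

noncomputable section

/-- Uniform scalar quantizer with bin width `θ`. -/
def quantize {m : ℕ} (θ : ℝ) (z : Fin m → ℝ) : Fin m → ℝ :=
  fun i => θ * (⌊z i / θ⌋ : ℝ) + θ / 2

/-- The quantization cell `B_θ`. -/
def quantCell (m : ℕ) (θ : ℝ) : Set (Fin m → ℝ) :=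
  {z | ∀ i, -(θ/2) ≤ z i ∧ z i < θ/2}

/-- The Rademacher (symmetric ±1) distribution on `ℝ`. -/
def radMeasure : Measure ℝ :=
  (2 : ℝ≥0∞)⁻¹ • Measure.dirac 1 + (2 : ℝ≥0∞)⁻¹ • Measure.dirac (-1)

/-- The standard symmetric exponential (Laplace) distribution on `ℝ`. -/
def laplaceMeasure : Measure ℝ :=
  MeasureTheory.volume.withDensity fun x => ENNReal.ofReal ((1/2) * Real.exp (-|x|))

/-- The heavy-tailed distribution with density `((γ-1)/(2γ)) min{1, |x|^{-γ}}`. -/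
def heavyMeasure (γ : ℝ) : Measure ℝ :=
  MeasureTheory.volume.withDensity fun x => ENNReal.ofReal (((γ-1)/(2*γ)) * min 1 (|x| ^ (-γ)))

/-- A log-concave measure on `ℝⁿ`. -/
def IsLogConcaveMeasure {n : ℕ} (ν : Measure (Fin n → ℝ)) : Prop :=
  ∀ A B : Set (Fin n → ℝ), MeasurableSet A → MeasurableSet B →
    ∀ θ : ℝ, 0 ≤ θ → θ ≤ 1 →
      ν A ^ θ * ν B ^ (1 - θ) ≤ ν (θ • A + (1 - θ) • B)

/-- An unconditional measure on `ℝⁿ`: invariant under sign flips of the coordinates. -/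
def IsUnconditionalMeasure {n : ℕ} (ν : Measure (Fin n → ℝ)) : Prop :=
  ∀ σ : Fin n → ℝ, (∀ i, σ i = 1 ∨ σ i = -1) →
    Measure.map (fun x i => σ i * x i) ν = ν

/-- An isotropic measure on `ℝⁿ`: mean zero and identity covariance. -/
def IsIsotropicMeasure {n : ℕ} (ν : Measure (Fin n → ℝ)) : Prop :=
  (∫ y, y ∂ν) = 0 ∧ ∀ x : Fin n → ℝ, ∫ y, (∑ j, y j * x j)^2 ∂ν = lpNormR 2 x ^ 2

/-- The semi-norm `‖B‖_s = sup_{x ∈ Σ_s^2} ⟨∑ᵢ Bᵢ, x⟩` on `m × n` matrices,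
where `Bᵢ` are the rows of `B`. -/
def rowSumSupNorm {m n : ℕ} (s : ℕ) (B : Matrix (Fin m) (Fin n) ℝ) : ℝ :=
  ⨆ x ∈ SigmaSparse ℝ 2 s, ∑ j, (∑ i, B i j) * x j

end
section Aux

lemma lpNormR_nonneg {n : ℕ} (p : ℝ) (x : Fin n → ℂ) : 0 ≤ lpNormR p x := by
  unfold lpNormR; positivity

lemma sum_rpow_nonneg {n : ℕ} (q : ℝ) (x : Fin n → ℂ) : 0 ≤ ∑ i, ‖x i‖ ^ q :=
  Finset.sum_nonneg fun i _ => Real.rpow_nonneg (norm_nonneg _) q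

lemma lpNormR_pos {n : ℕ} {q : ℝ} (hq : 0 < q) {x : Fin n → ℂ} (hx : x ≠ 0) :
    0 < lpNormR q x := by
  obtain ⟨i, hi⟩ := Function.ne_iff.1 hx
  have hsum : 0 < ∑ j, ‖x j‖ ^ q := by
    refine Finset.sum_pos' (fun j _ => Real.rpow_nonneg (norm_nonneg _) q)
      ⟨i, Finset.mem_univ i, ?_⟩
    exact Real.rpow_pos_of_pos (norm_pos_iff.2 hi) q
  exact Real.rpow_pos_of_pos hsum _

lemma lpNormR_smul {n : ℕ} {q : ℝ} (hq : 0 < q) {t : ℝ} (ht : 0 ≤ t) (z : Fin n → ℂ) :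
    lpNormR q (t • z) = t * lpNormR q z := by
  unfold lpNormR
  have h1 : ∀ i, ‖(t • z) i‖ ^ q = t ^ q * ‖z i‖ ^ q := by
    intro i
    have : ‖(t • z) i‖ = t * ‖z i‖ := by
      simp [Pi.smul_apply, norm_smul, abs_of_nonneg ht]
    rw [this, Real.mul_rpow ht (norm_nonneg _)]
  simp only [h1]
  rw [← Finset.mul_sum, Real.mul_rpow (Real.rpow_nonneg ht q) (sum_rpow_nonneg q z),
    one_div, Real.rpow_rpow_inv ht hq.ne']

lemma lpNormR_mono {n : ℕ} {q : ℝ} (hq : 0 < q) {u w : Fin n → ℂ}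
    (h : ∀ i, ‖u i‖ ≤ ‖w i‖) : lpNormR q u ≤ lpNormR q w := by
  unfold lpNormR
  apply Real.rpow_le_rpow (sum_rpow_nonneg q u)
  · exact Finset.sum_le_sum fun i _ => Real.rpow_le_rpow (norm_nonneg _) (h i) hq.le
  · positivity

lemma card_filter_val_lt {n s : ℕ} (hsn : s ≤ n) :
    (Finset.univ.filter (fun p : Fin n => p.val < s)).card = s := by
  have h : ∀ m ∈ Finset.range s, m < n := fun m hm => lt_of_lt_of_le (Finset.mem_range.1 hm) hsn
  have : Finset.univ.filter (fun p : Fin n => p.val < s) = Finset.attachFin (Finset.range s) h := by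
    ext p
    simp [Finset.mem_attachFin, Finset.mem_range]
  rw [this, Finset.card_attachFin, Finset.card_range]

lemma sum_top_s {n s : ℕ} (hs : 1 ≤ s) (hsn : s ≤ n) {g : Fin n → ℝ} (hg : Antitone g)
    {P : Finset (Fin n)} (hP : P.card = s) :
    ∑ p ∈ P, g p ≤ ∑ p ∈ Finset.univ.filter (fun p : Fin n => p.val < s), g p := by
  classical
  set R := Finset.univ.filter (fun p : Fin n => p.val < s) with hRdef
  have hR : R.card = s := card_filter_val_lt hsn
  have hsplitP : ∑ p ∈ P \ (P ∩ R), g p + ∑ p ∈ P ∩ R, g p = ∑ p ∈ P, g p :=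
    Finset.sum_sdiff (Finset.inter_subset_left)
  have hsplitR : ∑ p ∈ R \ (R ∩ P), g p + ∑ p ∈ R ∩ P, g p = ∑ p ∈ R, g p :=
    Finset.sum_sdiff (Finset.inter_subset_left)
  rw [Finset.sdiff_inter_self_left] at hsplitP hsplitR
  rw [← hsplitP, ← hsplitR, Finset.inter_comm R P]
  have hcard : (P \ R).card = (R \ P).card := by
    rw [Finset.card_sdiff_comm]; omega
  have hslt : s - 1 < n := by omega
  set c := g ⟨s - 1, hslt⟩ with hc
  have h1 : ∑ p ∈ P \ R, g p ≤ (P \ R).card • c := by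
    apply Finset.sum_le_card_nsmul
    intro p hp
    have hps : ¬ p.val < s := by
      have := (Finset.mem_sdiff.1 hp).2
      simpa [hRdef] using this
    exact hg (by rw [Fin.le_def]; show s - 1 ≤ p.val; omega)
  have h2 : (R \ P).card • c ≤ ∑ p ∈ R \ P, g p := by
    apply Finset.card_nsmul_le_sum
    intro p hp
    have hps : p.val < s := by
      have := (Finset.mem_sdiff.1 hp).1
      simpa [hRdef] using this
    exact hg (by rw [Fin.le_def]; show p.val ≤ s - 1; omega)
  have h3 : ∑ p ∈ P \ R, g p ≤ ∑ p ∈ R \ P, g p := by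
    refine h1.trans ?_
    rw [hcard]
    exact h2
  linarith [h3]

end Aux

/-- the truncated cone `T_{ρ,s}^q ∩ B_{ℓ_q^n}` is contained in
`(2 + ρ⁻¹) D_s^q`, where `D_s^q` is the convex hull of `Σ_s^q`. -/
theorem statement2 (n s : ℕ) (q ρ : ℝ) (hq : 1 ≤ q) (hρ : 0 < ρ) (hs : 1 ≤ s) (hsn : s ≤ n) :
    (coneT ℂ q ρ s : Set (Fin n → ℂ)) ∩ {x | lpNormR q x ≤ 1} ⊆
      (2 + ρ⁻¹) • convexHull ℝ (SigmaSparse ℂ q s : Set (Fin n → ℂ)) := by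
  classical
  intro x hx
  obtain ⟨⟨S, hScard, hcone⟩, hball⟩ := hx
  have hq0 : 0 < q := lt_of_lt_of_le one_pos hq
  have hq0' : (1:ℝ)/q ≠ 0 := by positivity
  have hn : 0 < n := lt_of_lt_of_le hs hsn
  have hspos : (0:ℝ) < (s:ℝ) := by exact_mod_cast hs
  set c : ℝ := 2 + ρ⁻¹ with hc
  have hcpos : 0 < c := by positivity
  rw [Set.mem_smul_set_iff_inv_smul_mem₀ hcpos.ne']
  -- a sparse unit vector and 0 ∈ convex hull
  set i0 : Fin n := ⟨0, hn⟩ with hi0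
  set e0 : Fin n → ℂ := fun i => if i = i0 then 1 else 0 with he0def
  have hnorm_e0 : ∀ E : Fin n → ℂ, (∀ i, ‖E i‖ = ‖e0 i‖) → lpNormR q E = 1 := by
    intro E hE
    unfold lpNormR
    have : ∀ i, ‖E i‖ ^ q = if i = i0 then 1 else 0 := by
      intro i
      rw [hE i]
      by_cases h : i = i0 <;>
        simp [he0def, h, Real.one_rpow, Real.zero_rpow hq0.ne']
    simp only [this]
    simp
  have hsp_e0 : ∀ E : Fin n → ℂ, (∀ i, ‖E i‖ = ‖e0 i‖) → sparsity E ≤ s := by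
    intro E hE
    have hsupp : Function.support E ⊆ {i0} := by
      intro i hi
      by_contra hii
      have : i ≠ i0 := hii
      have h0 : ‖E i‖ = 0 := by rw [hE i]; simp [he0def, this]
      exact hi (norm_eq_zero.1 h0)
    calc sparsity E ≤ ({i0} : Set (Fin n)).ncard :=
          Set.ncard_le_ncard hsupp (Set.finite_singleton _)
      _ = 1 := Set.ncard_singleton _
      _ ≤ s := hs
  have he0mem : e0 ∈ SigmaSparse ℂ q s :=
    ⟨hsp_e0 e0 (fun _ => rfl), hnorm_e0 e0 (fun _ => rfl)⟩
  have he0mem' : -e0 ∈ SigmaSparse ℂ q s :=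
    ⟨hsp_e0 (-e0) (fun i => by simp), hnorm_e0 (-e0) (fun i => by simp)⟩
  have h0conv : (0 : Fin n → ℂ) ∈ convexHull ℝ (SigmaSparse ℂ q s) := by
    have h1 := subset_convexHull ℝ (SigmaSparse ℂ q s) he0mem
    have h2 := subset_convexHull ℝ (SigmaSparse ℂ q s) he0mem'
    have h3 := (convex_convexHull ℝ (SigmaSparse ℂ q s)) h1 h2
      (by norm_num : (0:ℝ) ≤ 1/2) (by norm_num : (0:ℝ) ≤ 1/2) (by norm_num)
    simpa [smul_neg] using h3
  -- sorting
  set σ : Equiv.Perm (Fin n) := Tuple.sort (fun j => -‖x j‖) with hσ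
  set g : Fin n → ℝ := fun p => ‖x (σ p)‖ with hgdef
  have hganti : Antitone g := by
    intro p p' hpp'
    have hm := Tuple.monotone_sort (fun j => -‖x j‖) hpp'
    simp only [Function.comp_apply] at hm
    have : -‖x (σ p)‖ ≤ -‖x (σ p')‖ := hm
    simp only [hgdef]
    linarith
  have hg0 : ∀ p, 0 ≤ g p := fun p => norm_nonneg _
  -- blocks of positions
  set B : ℕ → Finset (Fin n) := fun k =>
    Finset.univ.filter (fun p : Fin n => s*k ≤ p.val ∧ p.val < s*(k+1)) with hBdef
  set y : ℕ → (Fin n → ℂ) := fun k i =>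
    if s*k ≤ (σ.symm i).val ∧ (σ.symm i).val < s*(k+1) then x i else 0 with hydef
  set a : ℕ → ℝ := fun k => ∑ p ∈ B k, g p with hadef
  set b : ℕ → ℝ := fun k => (∑ p ∈ B k, g p ^ q) ^ (1/q) with hbdef
  have ha0 : ∀ k, 0 ≤ a k := fun k => Finset.sum_nonneg fun p _ => hg0 p
  have hb0 : ∀ k, 0 ≤ b k := fun k =>
    Real.rpow_nonneg (Finset.sum_nonneg fun p _ => Real.rpow_nonneg (hg0 p) q) _
  -- the division characterization of blocks
  have hiff : ∀ j k : ℕ, (s*k ≤ j ∧ j < s*(k+1)) ↔ j / s = k := by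
    intro j k
    constructor
    · rintro ⟨h1, h2⟩
      exact Nat.div_eq_of_lt_le (by rw [mul_comm]; exact h1) (by rw [mul_comm]; exact h2)
    · rintro rfl
      have h1 := Nat.div_add_mod j s
      have h2 : j % s < s := Nat.mod_lt _ (by omega)
      have h3 : s * (j/s + 1) = s * (j/s) + s := by ring
      omega
  -- F1 : lpNormR of the block pieces
  have hF1 : ∀ k, lpNormR q (y k) = b k := by
    intro k
    unfold lpNormR
    simp only [hbdef]
    congr 1
    rw [← Equiv.sum_comp σ (fun i => ‖y k i‖ ^ q), Finset.sum_filter]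
    apply Finset.sum_congr rfl
    intro p _
    by_cases hp : s*k ≤ p.val ∧ p.val < s*(k+1)
    · simp [hydef, hp, Equiv.symm_apply_apply, hgdef]
    · simp [hydef, hp, Equiv.symm_apply_apply, Real.zero_rpow hq0.ne']
  -- F2 : the pieces sum to x
  have hF2 : ∑ k ∈ Finset.range n, y k = x := by
    funext i
    rw [Finset.sum_apply]
    have hj : ((σ.symm i).val) < n := (σ.symm i).isLt
    rw [Finset.sum_eq_single ((σ.symm i).val / s)]
    · simp only [hydef]
      rw [if_pos ((hiff _ _).2 rfl)]
    · intro k hk hkne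
      simp only [hydef]
      rw [if_neg]
      intro hcond
      exact hkne (((hiff _ _).1 hcond).symm)
    · intro hmem
      exfalso
      exact hmem (Finset.mem_range.2 (lt_of_le_of_lt (Nat.div_le_self _ _) hj))
  -- F3 : the block sums of g sum to the total
  have hG1 : ∑ p, g p = ∑ i, ‖x i‖ := Equiv.sum_comp σ (fun i => ‖x i‖)
  have hF3 : ∑ k ∈ Finset.range n, a k = ∑ i, ‖x i‖ := by
    rw [← hG1]
    simp only [hadef]
    have hBeq : ∀ k, B k = Finset.univ.filter (fun p : Fin n => p.val / s = k) := by
      intro k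
      simp only [hBdef]
      ext p
      simp only [Finset.mem_filter, Finset.mem_univ, true_and]
      exact hiff p.val k
    calc ∑ k ∈ Finset.range n, ∑ p ∈ B k, g p
        = ∑ k ∈ Finset.range n, ∑ p ∈ Finset.univ.filter (fun p : Fin n => p.val / s = k), g p := by
          exact Finset.sum_congr rfl fun k _ => by rw [hBeq k]
      _ = ∑ p, g p := Finset.sum_fiberwise_of_maps_to
          (fun p _ => Finset.mem_range.2 (lt_of_le_of_lt (Nat.div_le_self _ _) p.isLt)) g
  -- the total q-sum is at most 1
  have hsumq : ∑ i, ‖x i‖ ^ q ≤ 1 := by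
    have h1 : (∑ i, ‖x i‖ ^ q) = ((∑ i, ‖x i‖ ^ q) ^ (1/q)) ^ q := by
      rw [one_div, Real.rpow_inv_rpow (sum_rpow_nonneg q x) hq0.ne']
    rw [h1]
    calc ((∑ i, ‖x i‖ ^ q) ^ (1/q)) ^ q ≤ 1 ^ q :=
          Real.rpow_le_rpow (lpNormR_nonneg q x) hball hq0.le
      _ = 1 := Real.one_rpow q
  have hGq : ∑ p, g p ^ q = ∑ i, ‖x i‖ ^ q := Equiv.sum_comp σ (fun i => ‖x i‖ ^ q)
  -- F4 : b 0 ≤ 1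
  have hb0le : b 0 ≤ 1 := by
    simp only [hbdef]
    apply Real.rpow_le_one (Finset.sum_nonneg fun p _ => Real.rpow_nonneg (hg0 p) q) ?_
      (by positivity)
    calc ∑ p ∈ B 0, g p ^ q ≤ ∑ p, g p ^ q :=
          Finset.sum_le_sum_of_subset_of_nonneg (Finset.subset_univ _)
            (fun p _ _ => Real.rpow_nonneg (hg0 p) q)
      _ = ∑ i, ‖x i‖ ^ q := hGq
      _ ≤ 1 := hsumq
  -- B 0 is the first block and has cardinality s
  have hB0eq : B 0 = Finset.univ.filter (fun p : Fin n => p.val < s) := by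
    simp only [hBdef]
    ext p
    simp only [Finset.mem_filter, Finset.mem_univ, true_and]
    omega
  have hcardB0 : (B 0).card = s := by rw [hB0eq]; exact card_filter_val_lt hsn
  -- every block has cardinality at most s
  have hcardle : ∀ k, (B k).card ≤ s := by
    intro k
    have : (B k).card ≤ (Finset.range s).card := by
      apply Finset.card_le_card_of_injOn (fun p => p.val - s*k)
      · intro p hp
        simp only [hBdef, Finset.coe_filter, Set.mem_setOf_eq, Finset.mem_filter, Finset.mem_univ, true_and] at hp
        have h3 : s * (k + 1) = s * k + s := by ring
        exact Finset.mem_range.2 (show p.val - s*k < s by omega)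
      · intro p hp p' hp' hpp'
        simp only [hBdef, Finset.coe_filter, Set.mem_setOf_eq] at hp hp'
        have h3 : s * (k + 1) = s * k + s := by ring
        have h4 : p.val - s*k = p'.val - s*k := hpp'
        have : p.val = p'.val := by omega
        exact Fin.ext this
    simpa using this
  -- F5 : Hoelder, a 0 ≤ s^(1-1/q) * b 0
  have hHolder : a 0 ≤ (s:ℝ) ^ (1 - 1/q) * b 0 := by
    have hwsum : ∑ _p ∈ B 0, 1/(s:ℝ) = 1 := by
      rw [Finset.sum_const, hcardB0, nsmul_eq_mul]
      field_simp
    have hw := Real.arith_mean_le_rpow_mean (B 0) (fun _ => 1/(s:ℝ)) g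
      (fun _ _ => by positivity) hwsum (fun p _ => hg0 p) hq
    have hLHS : ∑ p ∈ B 0, (1/(s:ℝ)) * g p = a 0 / s := by
      rw [← Finset.mul_sum]; simp only [hadef]; ring
    have hRHS : (∑ p ∈ B 0, (1/(s:ℝ)) * g p ^ q) ^ (1/q) = (1/(s:ℝ)) ^ (1/q) * b 0 := by
      rw [← Finset.mul_sum, Real.mul_rpow (by positivity)
        (Finset.sum_nonneg fun p _ => Real.rpow_nonneg (hg0 p) q)]
    simp only [hLHS, hRHS] at hw
    have hpow : (1/(s:ℝ)) ^ (1/q) = ((s:ℝ) ^ ((1:ℝ)/q))⁻¹ := by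
      rw [one_div, Real.inv_rpow hspos.le, one_div]
    rw [hpow] at hw
    have hkey : (s:ℝ) ^ (1 - 1/q) = (s:ℝ) * ((s:ℝ) ^ ((1:ℝ)/q))⁻¹ := by
      rw [Real.rpow_sub hspos, Real.rpow_one, div_eq_mul_inv]
    rw [hkey, mul_assoc]
    calc a 0 = (s:ℝ) * (a 0 / s) := by field_simp
      _ ≤ (s:ℝ) * (((s:ℝ) ^ ((1:ℝ)/q))⁻¹ * b 0) := mul_le_mul_of_nonneg_left hw hspos.le
  -- F6 : tail block bound
  have hF6 : ∀ m : ℕ, b (m+1) ≤ (s:ℝ) ^ ((1:ℝ)/q - 1) * a m := by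
    intro m
    by_cases hne : s * (m + 1) < n
    · -- block m is full
      have hfull : (B m).card = s := by
        have hlt : ∀ j ∈ Finset.Ico (s*m) (s*(m+1)), j < n :=
          fun j hj => lt_of_lt_of_le (Finset.mem_Ico.1 hj).2 hne.le
        have : B m = Finset.attachFin (Finset.Ico (s*m) (s*(m+1))) hlt := by
          simp only [hBdef]
          ext p
          simp [Finset.mem_attachFin, Finset.mem_Ico]
        rw [this, Finset.card_attachFin, Nat.card_Ico]
        have : s * (m + 1) = s * m + s := by ring
        omega
      -- each entry of block (m+1) is at most a m / s
      have hgle : ∀ p ∈ B (m+1), g p ≤ a m / s := by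
        intro p hp
        have hle : ∀ r ∈ B m, g p ≤ g r := by
          intro r hr
          apply hganti
          simp only [hBdef, Finset.mem_filter] at hp hr
          rw [Fin.le_def]
          have h3 : s * (m + 1) = s * m + s := by ring
          omega
        have := Finset.card_nsmul_le_sum (B m) g (g p) hle
        rw [hfull, nsmul_eq_mul] at this
        rw [le_div_iff₀ hspos, mul_comm]
        exact this
      -- sum the bounds
      have hsumle : ∑ p ∈ B (m+1), g p ^ q ≤ (s:ℝ) * (a m / s) ^ q := by
        have h1 : ∑ p ∈ B (m+1), g p ^ q ≤ (B (m+1)).card • ((a m / s) ^ q) := by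
          apply Finset.sum_le_card_nsmul
          intro p hp
          exact Real.rpow_le_rpow (hg0 p) (hgle p hp) hq0.le
        refine h1.trans ?_
        rw [nsmul_eq_mul]
        apply mul_le_mul_of_nonneg_right _ (Real.rpow_nonneg (by positivity) q)
        exact_mod_cast hcardle (m+1)
      have hams : 0 ≤ a m / s := by positivity
      calc b (m+1) ≤ ((s:ℝ) * (a m / s) ^ q) ^ ((1:ℝ)/q) := by
            simp only [hbdef]
            exact Real.rpow_le_rpow
              (Finset.sum_nonneg fun p _ => Real.rpow_nonneg (hg0 p) q) hsumle (by positivity)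
        _ = (s:ℝ) ^ ((1:ℝ)/q) * (a m / s) := by
            rw [Real.mul_rpow hspos.le (Real.rpow_nonneg hams q), one_div,
              Real.rpow_rpow_inv hams hq0.ne']
        _ = (s:ℝ) ^ ((1:ℝ)/q - 1) * a m := by
            rw [Real.rpow_sub hspos, Real.rpow_one]
            ring
    · -- block m+1 is empty
      have hempty : B (m+1) = ∅ := by
        simp only [hBdef]
        ext p
        simp only [Finset.mem_filter, Finset.mem_univ, true_and, Finset.notMem_empty,
          iff_false]
        intro hcon
        exact absurd (lt_of_le_of_lt hcon.1 p.isLt) hne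
      have : b (m+1) = 0 := by
        simp only [hbdef, hempty, Finset.sum_empty]
        exact Real.zero_rpow hq0'
      rw [this]
      positivity
  -- F7 : S has ℓ¹ mass at most that of the top block
  have htop : ∑ i ∈ S, ‖x i‖ ≤ a 0 := by
    have himg : (S.image σ.symm).card = s := by
      rw [Finset.card_image_of_injective _ σ.symm.injective, hScard]
    have h1 : ∑ p ∈ S.image σ.symm, g p = ∑ i ∈ S, ‖x i‖ := by
      rw [Finset.sum_image (fun i _ j _ h => σ.symm.injective h)]
      apply Finset.sum_congr rfl
      intro i _
      simp only [hgdef, Equiv.apply_symm_apply]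
    have h2 := sum_top_s hs hsn hganti himg
    rw [h1] at h2
    simp only [hadef, hB0eq]
    exact h2
  -- translate the ℓ¹ norms
  have hL1c : lpNormR 1 (restrictS Sᶜ x) = ∑ i ∈ Sᶜ, ‖x i‖ := by
    unfold lpNormR restrictS
    simp only [Real.rpow_one, one_div_one]
    rw [← Finset.sum_filter_add_sum_filter_not Finset.univ (fun i => i ∈ Sᶜ)]
    have hz : ∀ i ∈ Finset.univ.filter (fun i => i ∉ Sᶜ), ‖if i ∈ Sᶜ then x i else 0‖ = 0 := by
      intro i hi
      rw [if_neg (Finset.mem_filter.1 hi).2, norm_zero]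
    rw [Finset.sum_congr rfl hz, Finset.sum_const_zero, add_zero]
    rw [Finset.filter_mem_eq_inter, Finset.univ_inter]
    apply Finset.sum_congr rfl
    intro i hi
    rw [if_pos hi]
  -- the cone condition gives a bound on the tail
  have hxSle : lpNormR q (restrictS S x) ≤ 1 := by
    refine le_trans (lpNormR_mono hq0 (fun i => ?_)) hball
    unfold restrictS
    by_cases h : i ∈ S <;> simp [h]
  have htail : ∑ i ∈ Sᶜ, ‖x i‖ ≤ (s:ℝ) ^ (1 - 1/q) / ρ := by
    have hKpos : (0:ℝ) < (s:ℝ) ^ (1 - 1/q) := Real.rpow_pos_of_pos hspos _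
    have h1 : ρ / (s:ℝ) ^ (1 - 1/q) * (∑ i ∈ Sᶜ, ‖x i‖) ≤ 1 := by
      rw [← hL1c]
      exact hcone.trans hxSle
    rw [div_mul_eq_mul_div, div_le_one hKpos] at h1
    rw [le_div_iff₀ hρ, mul_comm]
    exact h1
  -- F9 : the sum of the block norms is at most c
  have hsplit : ∑ i ∈ S, ‖x i‖ + ∑ i ∈ Sᶜ, ‖x i‖ = ∑ i, ‖x i‖ :=
    Finset.sum_add_sum_compl S (fun i => ‖x i‖)
  have hKK : (s:ℝ) ^ ((1:ℝ)/q - 1) * (s:ℝ) ^ (1 - 1/q) = 1 := by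
    rw [← Real.rpow_add hspos]
    have : (1:ℝ)/q - 1 + (1 - 1/q) = 0 := by ring
    rw [this, Real.rpow_zero]
  have htailsum : ∑ m ∈ Finset.range (n-1), a m ≤ a 0 + (s:ℝ) ^ (1 - 1/q)/ρ := by
    have h1 : ∑ m ∈ Finset.range (n-1), a m ≤ ∑ m ∈ Finset.range n, a m :=
      Finset.sum_le_sum_of_subset_of_nonneg (Finset.range_subset_range.2 (by omega))
        (fun m _ _ => ha0 m)
    rw [hF3] at h1
    calc ∑ m ∈ Finset.range (n-1), a m ≤ ∑ i, ‖x i‖ := h1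
      _ = ∑ i ∈ S, ‖x i‖ + ∑ i ∈ Sᶜ, ‖x i‖ := hsplit.symm
      _ ≤ a 0 + (s:ℝ) ^ (1 - 1/q)/ρ := add_le_add htop htail
  have hbsum : ∑ k ∈ Finset.range n, b k ≤ c := by
    have hn' : ∑ k ∈ Finset.range n, b k = ∑ m ∈ Finset.range (n-1), b (m+1) + b 0 := by
      conv_lhs => rw [show n = (n-1)+1 by omega]
      exact Finset.sum_range_succ' b (n-1)
    rw [hn']
    have h2 : ∑ m ∈ Finset.range (n-1), b (m+1) ≤
        (s:ℝ) ^ ((1:ℝ)/q - 1) * (a 0 + (s:ℝ) ^ (1 - 1/q)/ρ) := by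
      calc ∑ m ∈ Finset.range (n-1), b (m+1)
          ≤ ∑ m ∈ Finset.range (n-1), (s:ℝ) ^ ((1:ℝ)/q - 1) * a m :=
            Finset.sum_le_sum fun m _ => hF6 m
        _ = (s:ℝ) ^ ((1:ℝ)/q - 1) * ∑ m ∈ Finset.range (n-1), a m := by
            rw [Finset.mul_sum]
        _ ≤ _ := mul_le_mul_of_nonneg_left htailsum (Real.rpow_nonneg hspos.le _)
    have h3 : (s:ℝ) ^ ((1:ℝ)/q - 1) * (a 0 + (s:ℝ) ^ (1 - 1/q)/ρ) ≤ 1 + ρ⁻¹ := by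
      have hKnn : (0:ℝ) ≤ (s:ℝ) ^ ((1:ℝ)/q - 1) := Real.rpow_nonneg hspos.le _
      have h4 : a 0 + (s:ℝ) ^ (1 - 1/q)/ρ ≤
          (s:ℝ) ^ (1 - 1/q) * b 0 + (s:ℝ) ^ (1 - 1/q)/ρ := by linarith [hHolder]
      calc (s:ℝ) ^ ((1:ℝ)/q - 1) * (a 0 + (s:ℝ) ^ (1 - 1/q)/ρ)
          ≤ (s:ℝ) ^ ((1:ℝ)/q - 1) * ((s:ℝ) ^ (1 - 1/q) * b 0 + (s:ℝ) ^ (1 - 1/q)/ρ) :=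
            mul_le_mul_of_nonneg_left h4 hKnn
        _ = ((s:ℝ) ^ ((1:ℝ)/q - 1) * (s:ℝ) ^ (1 - 1/q)) * b 0 +
            ((s:ℝ) ^ ((1:ℝ)/q - 1) * (s:ℝ) ^ (1 - 1/q)) * ρ⁻¹ := by
            field_simp
        _ = b 0 + ρ⁻¹ := by rw [hKK]; ring
        _ ≤ 1 + ρ⁻¹ := by linarith [hb0le]
    have h5 : ∑ m ∈ Finset.range (n-1), b (m+1) + b 0 ≤ (1 + ρ⁻¹) + 1 :=
      add_le_add (h2.trans h3) hb0le
    refine h5.trans ?_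
    rw [hc]
    linarith
  -- the normalized block vectors
  set v : ℕ → (Fin n → ℂ) := fun k => if y k = 0 then e0 else (b k)⁻¹ • y k with hvdef
  have hyzero : ∀ k, y k = 0 → b k = 0 := by
    intro k hk
    rw [← hF1 k, hk]
    unfold lpNormR
    simp only [Pi.zero_apply, norm_zero, Real.zero_rpow hq0.ne', Finset.sum_const_zero]
    exact Real.zero_rpow hq0'
  have hvmem : ∀ k, v k ∈ SigmaSparse ℂ q s := by
    intro k
    simp only [hvdef]
    by_cases hk : y k = 0
    · rw [if_pos hk]; exact he0mem
    · rw [if_neg hk]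
      have hbpos : 0 < b k := by rw [← hF1 k]; exact lpNormR_pos hq0 hk
      constructor
      · -- sparsity
        have hsupp : Function.support ((b k)⁻¹ • y k) ⊆
            ↑(Finset.univ.filter (fun i : Fin n =>
              s*k ≤ (σ.symm i).val ∧ (σ.symm i).val < s*(k+1))) := by
          intro i hi
          have hyi : y k i ≠ 0 := by
            intro h0
            apply hi
            simp [Pi.smul_apply, h0]
          simp only [hydef] at hyi
          by_cases hcond : s*k ≤ (σ.symm i).val ∧ (σ.symm i).val < s*(k+1)
          · simp only [Finset.coe_filter, Set.mem_setOf_eq, Finset.mem_univ, true_and]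
            exact hcond
          · rw [if_neg hcond] at hyi
            exact absurd rfl hyi
        have hfcard : (Finset.univ.filter (fun i : Fin n =>
            s*k ≤ (σ.symm i).val ∧ (σ.symm i).val < s*(k+1))).card = (B k).card := by
          have heq : Finset.univ.filter (fun i : Fin n =>
              s*k ≤ (σ.symm i).val ∧ (σ.symm i).val < s*(k+1)) = (B k).image σ := by
            ext i
            simp only [Finset.mem_filter, Finset.mem_univ, true_and, Finset.mem_image, hBdef]
            constructor
            · intro hcond
              refine ⟨σ.symm i, ?_, Equiv.apply_symm_apply σ i⟩
              exact hcond
            · rintro ⟨p, hp, rfl⟩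
              rw [Equiv.symm_apply_apply]
              exact hp
          rw [heq, Finset.card_image_of_injective _ σ.injective]
        unfold sparsity
        calc (Function.support ((b k)⁻¹ • y k)).ncard
            ≤ (↑(Finset.univ.filter (fun i : Fin n =>
              s*k ≤ (σ.symm i).val ∧ (σ.symm i).val < s*(k+1))) : Set (Fin n)).ncard :=
              Set.ncard_le_ncard hsupp (Finset.finite_toSet _)
          _ = (Finset.univ.filter (fun i : Fin n =>
              s*k ≤ (σ.symm i).val ∧ (σ.symm i).val < s*(k+1))).card :=
              Set.ncard_coe_finset _
          _ ≤ s := by rw [hfcard]; exact hcardle k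
      · -- unit norm
        rw [lpNormR_smul hq0 (inv_nonneg.2 hbpos.le), hF1 k, inv_mul_cancel₀ hbpos.ne']
  have hsmulv : ∀ k, b k • v k = y k := by
    intro k
    simp only [hvdef]
    by_cases hk : y k = 0
    · rw [if_pos hk, hyzero k hk, hk, zero_smul]
    · rw [if_neg hk]
      have hbpos : 0 < b k := by rw [← hF1 k]; exact lpNormR_pos hq0 hk
      rw [smul_smul, mul_inv_cancel₀ hbpos.ne', one_smul]
  -- final convex combination
  set w : ℕ → ℝ := fun k => if k < n then b k / c else 1 - (∑ j ∈ Finset.range n, b j)/c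
    with hwdef
  set z : ℕ → (Fin n → ℂ) := fun k => if k < n then v k else 0 with hzdef
  have hmem : ∑ k ∈ Finset.range (n+1), w k • z k ∈ convexHull ℝ (SigmaSparse ℂ q s) := by
    apply (convex_convexHull ℝ (SigmaSparse ℂ q s)).sum_mem
    · intro k _
      simp only [hwdef]
      by_cases hkn : k < n
      · rw [if_pos hkn]
        exact div_nonneg (hb0 k) hcpos.le
      · rw [if_neg hkn]
        rw [sub_nonneg, div_le_one hcpos]
        exact hbsum
    · rw [Finset.sum_range_succ]
      have h1 : ∀ k ∈ Finset.range n, w k = b k / c := by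
        intro k hk
        simp only [hwdef]
        rw [if_pos (Finset.mem_range.1 hk)]
      rw [Finset.sum_congr rfl h1]
      simp only [hwdef]
      rw [if_neg (lt_irrefl n), ← Finset.sum_div]
      ring
    · intro k _
      simp only [hzdef]
      by_cases hkn : k < n
      · rw [if_pos hkn]
        exact subset_convexHull ℝ _ (hvmem k)
      · rw [if_neg hkn]
        exact h0conv
  have hsum_eq : ∑ k ∈ Finset.range (n+1), w k • z k = c⁻¹ • x := by
    rw [Finset.sum_range_succ]
    have hlast : w n • z n = 0 := by
      simp only [hwdef, hzdef, if_neg (lt_irrefl n), smul_zero]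
    rw [hlast, add_zero]
    have h1 : ∀ k ∈ Finset.range n, w k • z k = c⁻¹ • (b k • v k) := by
      intro k hk
      have hkn := Finset.mem_range.1 hk
      simp only [hwdef, hzdef]
      rw [if_pos hkn, if_pos hkn, smul_smul]
      congr 1
      rw [div_eq_mul_inv, mul_comm]
    rw [Finset.sum_congr rfl h1, ← Finset.smul_sum]
    congr 1
    rw [Finset.sum_congr rfl (fun k _ => hsmulv k), hF2]
  rw [← hsum_eq]
  exact hmem
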